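/- A Lie subalgebra u of a Lie bialgebra (g, δ) satisfies δ(u) ⊂ g ⊗ [u,u] + [u,u] ⊗ g if and only if [[u,u]⁰, [u,u]⁰]_{g*} ⊂ u⁰, where [·,·]_{g*} is the Lie bracket on g* dual to δ and V⁰ denotes the annihilator of a subspace V ⊂ g in g*. -/
import Mathlib


/- STATEMENT 9: For a finite-dimensional Lie bialgebra (g, δ) and a Lie subalgebra u ⊆ g,
δ(u) ⊆ g ⊗ [u,u] + [u,u] ⊗ g  ⟺  [[u,u]⁰, [u,u]⁰]_{g*} ⊆ u⁰,
where [·,·]_{g*} is the Lie bracket on g* dual to δ and V⁰ the annihilator. -/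

open TensorProduct

section defs

variable (K : Type*) [Field K] [CharZero K]
variable (L : Type*) [LieRing L] [LieAlgebra K L]

/-- the image of `p ⊗ q` in `L ⊗ L`, for submodules `p q ⊆ L`. -/
noncomputable def tpSub (p q : Submodule K L) : Submodule K (L ⊗[K] L) :=
  Submodule.map₂ (TensorProduct.mk K L L) p q

/-- the derived subalgebra `[u,u]` of a Lie subalgebra `u`, as a submodule of `L`. -/
def derived (u : LieSubalgebra K L) : Submodule K L :=
  Submodule.span K {z : L | ∃ a ∈ u, ∃ b ∈ u, z = ⁅a, b⁆}

/-- the bracket on `g*` dual to a cobracket `δ` : `[ξ,η](z) = (ξ ⊗ η)(δ z)`. -/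
noncomputable def dualBr (δ : L →ₗ[K] L ⊗[K] L) (ξ η : Module.Dual K L) :
    Module.Dual K L :=
  LinearMap.mul' K K ∘ₗ TensorProduct.map ξ η ∘ₗ δ

end defs

/-- membership in `L ⊗ D + D ⊗ L` is detected by the quotient map `L → L/D`. -/
lemma mem_sup_iff_mapQ {K L : Type*} [Field K] [AddCommGroup L] [Module K L]
    (D : Submodule K L) (x : L ⊗[K] L) :
    x ∈ Submodule.map₂ (TensorProduct.mk K L L) ⊤ D ⊔ Submodule.map₂ (TensorProduct.mk K L L) D ⊤
      ↔ TensorProduct.map D.mkQ D.mkQ x = 0 := by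
  have hker : LinearMap.ker (TensorProduct.map D.mkQ D.mkQ)
      = LinearMap.range (LinearMap.lTensor L D.subtype)
        ⊔ LinearMap.range (LinearMap.rTensor L D.subtype) :=
    TensorProduct.map_ker (LinearMap.exact_subtype_mkQ D) D.mkQ_surjective
      (LinearMap.exact_subtype_mkQ D) D.mkQ_surjective
  have h1 : LinearMap.range (LinearMap.lTensor L D.subtype)
      = Submodule.map₂ (TensorProduct.mk K L L) ⊤ D := by
    apply le_antisymm
    · rintro _ ⟨y, rfl⟩
      induction y using TensorProduct.induction_on with
      | zero => simp
      | tmul a b => exact Submodule.apply_mem_map₂ _ Submodule.mem_top b.2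
      | add y z hy hz => rw [map_add]; exact Submodule.add_mem _ hy hz
    · rw [Submodule.map₂_le]
      intro a _ b hb
      exact ⟨a ⊗ₜ ⟨b, hb⟩, rfl⟩
  have h2 : LinearMap.range (LinearMap.rTensor L D.subtype)
      = Submodule.map₂ (TensorProduct.mk K L L) D ⊤ := by
    apply le_antisymm
    · rintro _ ⟨y, rfl⟩
      induction y using TensorProduct.induction_on with
      | zero => simp
      | tmul a b => exact Submodule.apply_mem_map₂ _ a.2 Submodule.mem_top
      | add y z hy hz => rw [map_add]; exact Submodule.add_mem _ hy hz
    · rw [Submodule.map₂_le]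
      intro a ha b _
      exact ⟨(⟨a, ha⟩ : D) ⊗ₜ b, rfl⟩
  rw [← h1, ← h2, ← hker, LinearMap.mem_ker]

theorem stmt9 {K : Type*} [Field K] [CharZero K]
    {L : Type*} [LieRing L] [LieAlgebra K L] [FiniteDimensional K L]
    -- a Lie bialgebra cobracket δ on g
    (δ : L →ₗ[K] L ⊗[K] L)
    (hskew : ∀ z : L, TensorProduct.comm K L L (δ z) = - δ z)
    (hcoc : ∀ z w : L, δ ⁅z, w⁆ = ⁅z, δ w⁆ - ⁅w, δ z⁆)
    (u : LieSubalgebra K L) :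
    -- strong coisotropy of u is equivalent to [[u,u]⁰,[u,u]⁰]_{g*} ⊆ u⁰
    (∀ z ∈ u, δ z ∈
        tpSub K L ⊤ (derived K L u) ⊔ tpSub K L (derived K L u) ⊤)
      ↔ (∀ ξ η : Module.Dual K L,
          ξ ∈ (derived K L u).dualAnnihilator → η ∈ (derived K L u).dualAnnihilator →
          dualBr K L δ ξ η ∈ u.toSubmodule.dualAnnihilator) := by
  classical
  set D : Submodule K L := derived K L u with hD
  constructor
  · -- forward
    intro hW ξ η hξ hη
    rw [Submodule.mem_dualAnnihilator]
    intro w hw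
    have hδw := hW w hw
    rw [tpSub, tpSub, mem_sup_iff_mapQ] at hδw
    -- show mul' ∘ map ξ η vanishes on ker (map mkQ mkQ); instead vanish on the sup directly
    have hδw' := hW w hw
    have hF : (tpSub K L ⊤ D ⊔ tpSub K L D ⊤) ≤
        LinearMap.ker (LinearMap.mul' K K ∘ₗ TensorProduct.map ξ η) := by
      apply sup_le
      · rw [tpSub, Submodule.map₂_le]
        intro a _ b hb
        simp only [LinearMap.mem_ker, LinearMap.coe_comp, Function.comp_apply,
          TensorProduct.mk_apply, TensorProduct.map_tmul, LinearMap.mul'_apply]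
        rw [Submodule.mem_dualAnnihilator] at hη
        rw [hη b hb, mul_zero]
      · rw [tpSub, Submodule.map₂_le]
        intro a ha b _
        simp only [LinearMap.mem_ker, LinearMap.coe_comp, Function.comp_apply,
          TensorProduct.mk_apply, TensorProduct.map_tmul, LinearMap.mul'_apply]
        rw [Submodule.mem_dualAnnihilator] at hξ
        rw [hξ a ha, zero_mul]
    have := hF hδw'
    rw [LinearMap.mem_ker] at this
    simpa [dualBr] using this
  · -- backward
    intro H z hz
    rw [tpSub, tpSub, mem_sup_iff_mapQ]
    set Q := L ⧸ D
    set π : L →ₗ[K] Q := D.mkQ with hπ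
    -- suffices: every dual functional kills it
    rw [← Module.forall_dual_apply_eq_zero_iff K]
    intro φ
    -- φ is in the range of dualDistrib
    have : FiniteDimensional K Q := inferInstance
    let b := Module.finBasis K Q
    have hsurj : Function.Surjective (TensorProduct.dualDistrib K Q Q) := by
      intro ψ
      refine ⟨TensorProduct.dualDistribInvOfBasis b b ψ, ?_⟩
      have h := TensorProduct.dualDistrib_dualDistribInvOfBasis_left_inverse b b
      exact LinearMap.congr_fun h ψ
    obtain ⟨t, rfl⟩ := hsurj φ
    induction t using TensorProduct.induction_on with
    | zero => simp
    | add s t hs ht => rw [map_add, LinearMap.add_apply, hs, ht, add_zero]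
    | tmul ξ' η' =>
        -- pull back the functionals along π
        have hξ : (ξ' ∘ₗ π) ∈ D.dualAnnihilator := by
          rw [Submodule.mem_dualAnnihilator]
          intro w hw
          have h0 : π w = 0 := (Submodule.Quotient.mk_eq_zero D).mpr hw
          simp [LinearMap.comp_apply, h0]
        have hη : (η' ∘ₗ π) ∈ D.dualAnnihilator := by
          rw [Submodule.mem_dualAnnihilator]
          intro w hw
          have h0 : π w = 0 := (Submodule.Quotient.mk_eq_zero D).mpr hw
          simp [LinearMap.comp_apply, h0]
        have key : ∀ y : L ⊗[K] L,
            TensorProduct.dualDistrib K Q Q (ξ' ⊗ₜ η') (TensorProduct.map π π y)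
              = LinearMap.mul' K K (TensorProduct.map (ξ' ∘ₗ π) (η' ∘ₗ π) y) := by
          intro y
          induction y using TensorProduct.induction_on with
          | zero => simp
          | tmul a c => simp [LinearMap.mul'_apply]
          | add y₁ y₂ h₁ h₂ => rw [map_add, map_add, map_add, map_add, h₁, h₂]
        rw [key]
        have := H (ξ' ∘ₗ π) (η' ∘ₗ π) hξ hη
        rw [Submodule.mem_dualAnnihilator] at this
        simpa [dualBr] using this z hz
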